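/- arXiv:1509.03098 — 2 statements merged into one kernel-verified Lean document; each statement's English description precedes it below -/
import Mathlib

section
/- Fix an integer p ≥ 3 and N ≥ 2, and let K(x,y) = ( ⟨x,y⟩ + √(1−‖x‖²)·√(1−‖y‖²) )^p for x, y in the open unit ball of ℝ^{N−1}. Write W(x,0) = √(1−‖x‖²). Then for all x in the open unit ball and all indices 1 ≤ i, j, k, l ≤ N−1: (i) ∂K/∂y_i(x,0) = p·W(x,0)^{p−1}·x_i; (ii) ∂²K/∂y_i∂y_j(x,0) = −δ_{ij}·p·W(x,0)^p + p(p−1)·W(x,0)^{p−2}·x_i x_j; (iii) ∂²K/∂x_i∂y_j(0,0) = δ_{ij}·p; (iv) ∂³K/∂x_i∂x_j∂y_k(0,0) = 0; (v) ∂⁴K/∂x_i∂x_j∂y_k∂y_l(0,0) = p(p−1)·[δ_{ij}δ_{kl} + δ_{il}δ_{jk} + δ_{ik}δ_{jl}] + p·δ_{ij}δ_{kl}. (These are the covariances, at the origin, between the field, its gradient, and its Hessian, for a centered Gaussian field with covariance kernel K.) -/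
open MeasureTheory ProbabilityTheory Filter Topology Asymptotics
open scoped NNReal ENNReal

noncomputable section

namespace PSpin

/-- The sphere of radius `√N` in `ℝ^N`. -/
def sphereN (N : ℕ) : Set (EuclideanSpace ℝ (Fin N)) :=
  {σ | ‖σ‖ = Real.sqrt N}

/-- The pure `p`-spin Hamiltonian with disorder coefficients `J`. -/
def hamiltonian (p N : ℕ) (J : (Fin p → Fin N) → ℝ) (σ : EuclideanSpace ℝ (Fin N)) : ℝ :=
  ((N : ℝ) ^ (((p : ℝ) - 1) / 2))⁻¹ * ∑ i : Fin p → Fin N, J i * ∏ k : Fin p, σ (i k)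

/-- `σ` is a critical point of the restriction of `f` to the sphere of radius `√N`:
it lies on the sphere and the differential of `f` at `σ` vanishes on the tangent
space of the sphere at `σ`. -/
def IsCritical {N : ℕ} (f : EuclideanSpace ℝ (Fin N) → ℝ)
    (σ : EuclideanSpace ℝ (Fin N)) : Prop :=
  σ ∈ sphereN N ∧
    ∀ v : EuclideanSpace ℝ (Fin N), (inner ℝ v σ : ℝ) = 0 → fderiv ℝ f σ v = 0

/-- The semicircle measure. -/
def semicircle : Measure ℝ :=
  volume.withDensity fun x =>
    ENNReal.ofReal (if |x| ≤ 2 then Real.sqrt (4 - x ^ 2) / (2 * Real.pi) else 0)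

/-- `Ω(x) = ∫ log |λ - x| dμ*(λ)` for the semicircle measure `μ*`. -/
def OmegaFn (x : ℝ) : ℝ := ∫ lam, Real.log |lam - x| ∂semicircle

def gammaP (p : ℕ) : ℝ := Real.sqrt ((p : ℝ) / ((p : ℝ) - 1))

def Einfty (p : ℕ) : ℝ := 2 * Real.sqrt (((p : ℝ) - 1) / (p : ℝ))

/-- The exponential growth rate `Θ_p`. -/
def Theta (p : ℕ) (u : ℝ) : ℝ :=
  if u < 0 then
    1 / 2 + Real.log ((p : ℝ) - 1) / 2 - u ^ 2 / 2 + OmegaFn (gammaP p * u)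
  else Real.log ((p : ℝ) - 1) / 2

def iotaP (p : ℕ) : ℝ := (1 + (-1 : ℝ) ^ p) / 2

def htilde (x : ℝ) : ℝ :=
  |(x - 1) / (x + 1)| ^ ((1 : ℝ) / 4) + |(x + 1) / (x - 1)| ^ ((1 : ℝ) / 4)

def K0 (p : ℕ) (E0 cp : ℝ) : ℝ :=
  E0 / 2 -
    Real.log ((1 + iotaP p) * htilde (-(gammaP p * E0) / 2) / (2 * Real.sqrt (2 * Real.pi))) / cp

/-- The centering sequence `m_N`. -/
def mSeq (p : ℕ) (E0 cp : ℝ) (N : ℕ) : ℝ :=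
  -E0 * N + Real.log N / (2 * cp) - K0 p E0 cp

/-- The constant `C_0 = (γ_p/2) ∫ (γ_p E_0 - x)⁻¹ dμ*(x)`. -/
def C0 (p : ℕ) (E0 : ℝ) : ℝ := gammaP p / 2 * ∫ x, (gammaP p * E0 - x)⁻¹ ∂semicircle

/-- The extremal point process of critical points, evaluated on a set `B ⊆ ℝ`. -/
def xi (p N : ℕ) (J : (Fin p → Fin N) → ℝ) (m : ℝ) (B : Set ℝ) : ℝ :=
  (1 + iotaP p)⁻¹ *
    (Nat.card {σ : EuclideanSpace ℝ (Fin N) //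
      IsCritical (hamiltonian p N J) σ ∧ hamiltonian p N J σ - m ∈ B} : ℝ)

/-- The perturbed Hamiltonian `H_N^+ = H_N + N^{-1/2} H_N'`. -/
def hamPlus (p N : ℕ) (J J' : (Fin p → Fin N) → ℝ) (σ : EuclideanSpace ℝ (Fin N)) : ℝ :=
  hamiltonian p N J σ + (Real.sqrt N)⁻¹ * hamiltonian p N J' σ

/-- The overlap `R(σ, σ') = ⟨σ, σ'⟩ / N`. -/
def overlap {N : ℕ} (σ σ' : EuclideanSpace ℝ (Fin N)) : ℝ := (inner ℝ σ σ' : ℝ) / N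

/-- Membership in `𝒞_N(L)`: a critical point of `H_N` with value within `L` of `m`. -/
def critNear (p N : ℕ) (J : (Fin p → Fin N) → ℝ) (m L : ℝ)
    (σ : EuclideanSpace ℝ (Fin N)) : Prop :=
  IsCritical (hamiltonian p N J) σ ∧ |hamiltonian p N J σ - m| ≤ L

/-- Membership in `𝒞_N^+(L)`. -/
def critNearPlus (p N : ℕ) (J J' : (Fin p → Fin N) → ℝ) (m L : ℝ)
    (σ : EuclideanSpace ℝ (Fin N)) : Prop :=
  IsCritical (hamPlus p N J J') σ ∧ |hamPlus p N J J' σ - m| ≤ L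

/-- The disorder coefficients are i.i.d. standard Gaussian random variables. -/
def IsStdGaussian {Ω : Type*} [MeasurableSpace Ω] (P : Measure Ω) (p N : ℕ)
    (J : Ω → (Fin p → Fin N) → ℝ) : Prop :=
  Measure.map J P = Measure.pi fun _ : Fin p → Fin N => gaussianReal 0 1

/-- `W(x, y) = ⟨x, y⟩ + √(1 - ‖x‖²) √(1 - ‖y‖²)`. -/
def Wfun {n : ℕ} (x y : EuclideanSpace ℝ (Fin n)) : ℝ :=
  (inner ℝ x y : ℝ) + Real.sqrt (1 - ‖x‖ ^ 2) * Real.sqrt (1 - ‖y‖ ^ 2)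

/-- The squared canonical-metric distance of the error field `f⁽¹⁾`. -/
def phi1sq (p : ℕ) {n : ℕ} (x y : EuclideanSpace ℝ (Fin n)) : ℝ :=
  2 - 2 * Wfun x y ^ p + p * ‖x - y‖ ^ 2
    + 2 * p * (1 - ‖x‖ ^ 2) ^ (((p : ℝ) - 1) / 2) * (inner ℝ x (y - x) : ℝ)
    - 2 * p * (1 - ‖y‖ ^ 2) ^ (((p : ℝ) - 1) / 2) * (inner ℝ y (y - x) : ℝ)

/-- The covariance kernel `K(x,y) = W(x,y)^p`. -/
def Kcov (p : ℕ) {n : ℕ} (x y : EuclideanSpace ℝ (Fin n)) : ℝ := Wfun x y ^ p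

end PSpin

open PSpin

lemma polyQ (Q B : ℝ) : HasDerivAt (fun t : ℝ => Q - t^2 - 2*B*t) (-(2*B)) 0 := by
  have h1 : HasDerivAt (fun t : ℝ => t^2) 0 0 := by simpa using hasDerivAt_pow 2 (0:ℝ)
  have h2 : HasDerivAt (fun t : ℝ => 2*B*t) (2*B) 0 := by
    simpa using (hasDerivAt_id (0:ℝ)).const_mul (2*B)
  simpa using ((hasDerivAt_const (0:ℝ) Q).fun_sub h1).fun_sub h2

lemma sqrtQ (Q B : ℝ) (hQ : 0 < Q) :
    HasDerivAt (fun t : ℝ => Real.sqrt (Q - t^2 - 2*B*t)) (-B / Real.sqrt Q) 0 := by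
  have h := (polyQ Q B).sqrt (by simpa using hQ.ne')
  convert h using 1
  simp only [ne_eq, OfNat.ofNat_ne_zero, not_false_eq_true, zero_pow, mul_zero, sub_zero]
  rw [div_eq_div_iff (Real.sqrt_pos.2 hQ).ne' (by positivity)]
  ring

lemma sqrtQ0 : HasDerivAt (fun t : ℝ => Real.sqrt (1 - t^2)) 0 0 := by
  have h := sqrtQ 1 0 one_pos
  simpa only [mul_zero, zero_mul, sub_zero, neg_zero, zero_div] using h

lemma divsqrtQ (Q B : ℝ) (hQ : 0 < Q) :
    HasDerivAt (fun t : ℝ => t / Real.sqrt (Q - t^2 - 2*B*t)) (1 / Real.sqrt Q) 0 := by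
  have h := (hasDerivAt_id (0:ℝ)).fun_div (sqrtQ Q B hQ) (by simpa using (Real.sqrt_pos.2 hQ).ne')
  refine (h).congr_deriv (Eq.symm ?_)
  simp only [ne_eq, OfNat.ofNat_ne_zero, not_false_eq_true, zero_pow, mul_zero, sub_zero,
    id_eq, zero_mul]
  rw [one_mul, Real.sq_sqrt hQ.le, Real.sqrt_div_self']

lemma divsqrtQ0 : HasDerivAt (fun t : ℝ => t / Real.sqrt (1 - t^2)) 1 0 := by
  have h := divsqrtQ 1 0 one_pos
  simp only [Real.sqrt_one, div_one] at h
  convert h using 2 with t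
  ring_nf

/-- level-one derivative lemma -/
lemma hasDerivAt_main (p : ℕ) (c0 c1 C Q B : ℝ) (hQ : 0 < Q) :
    HasDerivAt (fun t : ℝ => (c0 + c1*t + C*Real.sqrt (Q - t^2 - 2*B*t))^p)
      (↑p * (c0 + C*Real.sqrt Q)^(p-1) * (c1 - C*(B/Real.sqrt Q))) 0 := by
  have hb : HasDerivAt (fun t : ℝ => c0 + c1*t + C*Real.sqrt (Q - t^2 - 2*B*t))
      (c1 - C*(B/Real.sqrt Q)) 0 := by
    have := ((hasDerivAt_const (0:ℝ) c0).fun_add ((hasDerivAt_id (0:ℝ)).const_mul c1)).fun_add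
      ((sqrtQ Q B hQ).const_mul C)
    refine (this).congr_deriv (Eq.symm ?_)
    ring
  have := hb.fun_pow p
  refine (this).congr_deriv (Eq.symm ?_)
  norm_num

/-- level-two derivative lemma (x-side second derivative at 0) -/
lemma hasDerivAt_second (p : ℕ) (e1 e2 C C2 : ℝ) :
    HasDerivAt (fun s : ℝ =>
        ↑p * (e1*s + C*Real.sqrt (1-s^2))^(p-1) * (e2 - C2*(s/Real.sqrt (1-s^2))))
      (↑p*(↑(p-1))*C^(p-1-1)*(e1*e2) - ↑p*C^(p-1)*C2) 0 := by
  have hA : HasDerivAt (fun s : ℝ => e1*s + C*Real.sqrt (1-s^2)) e1 0 := by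
    have := ((hasDerivAt_id (0:ℝ)).const_mul e1).fun_add (sqrtQ0.const_mul C)
    refine (this).congr_deriv (Eq.symm ?_)
    ring
  have hB : HasDerivAt (fun s : ℝ => e2 - C2*(s/Real.sqrt (1-s^2))) (-C2) 0 := by
    have := (hasDerivAt_const (0:ℝ) e2).fun_sub (divsqrtQ0.const_mul C2)
    refine (this).congr_deriv (Eq.symm ?_)
    ring
  have h2 := ((hA.fun_pow (p-1)).fun_mul hB).const_mul (p:ℝ)
  simp only [← mul_assoc] at h2
  refine (h2).congr_deriv (Eq.symm ?_)
  norm_num [Real.sqrt_one]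
  ring

section ScalarForms
variable {n : ℕ}

lemma PS_inner_ss (i j : Fin n) (t s : ℝ) :
    (inner ℝ (EuclideanSpace.single i t) (EuclideanSpace.single j s) : ℝ)
      = (if i = j then (1:ℝ) else 0) * (t * s) := by
  rw [EuclideanSpace.inner_single_left]
  simp only [EuclideanSpace.single_apply, RCLike.star_def, conj_trivial, eq_comm]
  split <;> ring

lemma PS_inner_xs (x : EuclideanSpace ℝ (Fin n)) (i : Fin n) (t : ℝ) :
    (inner ℝ x (EuclideanSpace.single i t) : ℝ) = t * x i := by
  rw [EuclideanSpace.inner_single_right]; simp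

lemma PS_normsq_s (i : Fin n) (t : ℝ) : ‖EuclideanSpace.single i t‖^2 = t^2 := by
  rw [EuclideanSpace.norm_single, Real.norm_eq_abs, sq_abs]

lemma PS_normsq_ss (i j : Fin n) (t s : ℝ) :
    ‖EuclideanSpace.single i t + EuclideanSpace.single j s‖ ^ 2
      = t^2 + s^2 + 2 * (if i = j then (1:ℝ) else 0) * (t * s) := by
  rw [@norm_add_sq_real, EuclideanSpace.inner_single_left]
  simp only [EuclideanSpace.single_apply, conj_trivial, EuclideanSpace.norm_single,
    Real.norm_eq_abs, sq_abs, eq_comm]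
  split <;> ring

end ScalarForms

section Parts
variable {n : ℕ}

lemma part1 (p : ℕ) (x : EuclideanSpace ℝ (Fin n)) (hx : ‖x‖ < 1) (i : Fin n) :
    deriv (fun t => Kcov p x (EuclideanSpace.single i t)) 0
      = p * Real.sqrt (1 - ‖x‖ ^ 2) ^ (p - 1) * x i := by
  have ha : (0:ℝ) < 1 - ‖x‖^2 := by nlinarith [norm_nonneg x]
  have h1 : ∀ t : ℝ, Kcov p x (EuclideanSpace.single i t)
      = (0 + x i * t + Real.sqrt (1 - ‖x‖^2) * Real.sqrt (1 - t^2 - 2*0*t))^p := by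
    intro t
    have e : 1 - ‖EuclideanSpace.single i t‖^2 = 1 - t^2 - 2*0*t := by rw [PS_normsq_s]; ring
    rw [Kcov, Wfun, PS_inner_xs, e]
    ring
  simp only [h1]
  rw [(hasDerivAt_main p 0 (x i) (Real.sqrt (1 - ‖x‖^2)) 1 0 one_pos).deriv]
  norm_num [Real.sqrt_one]

lemma part3 (p : ℕ) (i j : Fin n) :
    deriv (fun s => deriv (fun t =>
        Kcov p (EuclideanSpace.single i s) (EuclideanSpace.single j t) : ℝ → ℝ) 0) 0
      = (if i = j then (1 : ℝ) else 0) * p := by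
  set d : ℝ := if i = j then (1:ℝ) else 0 with hd
  have level1 : ∀ s ∈ Set.Ioo (-1:ℝ) 1,
      deriv (fun t => Kcov p (EuclideanSpace.single i s) (EuclideanSpace.single j t)) 0
        = ↑p * Real.sqrt (1-s^2)^(p-1) * (d*s) := by
    intro s hs
    have hQ : (0:ℝ) < 1 - s^2 := by nlinarith [hs.1, hs.2]
    have h1 : ∀ t : ℝ, Kcov p (EuclideanSpace.single i s) (EuclideanSpace.single j t)
        = (0 + (d*s)*t + Real.sqrt (1-s^2) * Real.sqrt (1 - t^2 - 2*0*t))^p := by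
      intro t
      have e : 1 - ‖EuclideanSpace.single j t‖^2 = 1 - t^2 - 2*0*t := by rw [PS_normsq_s]; ring
      rw [Kcov, Wfun, PS_inner_ss, PS_normsq_s, e, hd]
      ring
    simp only [h1]
    rw [(hasDerivAt_main p 0 (d*s) (Real.sqrt (1-s^2)) 1 0 one_pos).deriv]
    norm_num [Real.sqrt_one]
  have hev : (fun s => deriv (fun t =>
      Kcov p (EuclideanSpace.single i s) (EuclideanSpace.single j t)) 0)
      =ᶠ[nhds (0:ℝ)] (fun s => ↑p * Real.sqrt (1-s^2)^(p-1) * (d*s)) := by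
    filter_upwards [Ioo_mem_nhds (by norm_num : (-1:ℝ) < 0) (by norm_num : (0:ℝ) < 1)] with s hs
    exact level1 s hs
  rw [hev.deriv_eq]
  have h2 : HasDerivAt (fun s : ℝ => ↑p * Real.sqrt (1-s^2)^(p-1) * (d*s)) (d*↑p) 0 := by
    have := ((sqrtQ0.fun_pow (p-1)).const_mul (p:ℝ)).fun_mul ((hasDerivAt_id (0:ℝ)).const_mul d)
    refine (this).congr_deriv (Eq.symm ?_)
    norm_num [Real.sqrt_one]
    ring
  rw [h2.deriv]

lemma part2 (p : ℕ) (hp : 3 ≤ p) (x : EuclideanSpace ℝ (Fin n)) (hx : ‖x‖ < 1) (i j : Fin n) :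
    deriv (fun s => deriv (fun t =>
        Kcov p x (EuclideanSpace.single i t + EuclideanSpace.single j s)) 0) 0
      = -(if i = j then (1 : ℝ) else 0) * p * Real.sqrt (1 - ‖x‖ ^ 2) ^ p
        + p * ((p : ℝ) - 1) * Real.sqrt (1 - ‖x‖ ^ 2) ^ (p - 2) * (x i * x j) := by
  have ha : (0:ℝ) < 1 - ‖x‖^2 := by nlinarith [norm_nonneg x]
  set a := Real.sqrt (1 - ‖x‖^2) with hadef
  set d : ℝ := if i = j then (1:ℝ) else 0 with hd
  have level1 : ∀ s ∈ Set.Ioo (-1:ℝ) 1,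
      deriv (fun t => Kcov p x (EuclideanSpace.single i t + EuclideanSpace.single j s)) 0
        = ↑p * (x j * s + a*Real.sqrt (1-s^2))^(p-1) * (x i - (a*d)*(s/Real.sqrt (1-s^2))) := by
    intro s hs
    have hQ : (0:ℝ) < 1 - s^2 := by nlinarith [hs.1, hs.2]
    have h1 : ∀ t : ℝ, Kcov p x (EuclideanSpace.single i t + EuclideanSpace.single j s)
        = (x j * s + x i * t + a*Real.sqrt ((1-s^2) - t^2 - 2*(d*s)*t))^p := by
      intro t
      have e : 1 - ‖EuclideanSpace.single i t + EuclideanSpace.single j s‖^2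
          = (1-s^2) - t^2 - 2*(d*s)*t := by rw [PS_normsq_ss, ← hd]; ring
      rw [Kcov, Wfun, inner_add_right, PS_inner_xs, PS_inner_xs, e]
      ring
    simp only [h1]
    rw [(hasDerivAt_main p (x j * s) (x i) a (1-s^2) (d*s) hQ).deriv]
    ring
  have hev : (fun s => deriv (fun t =>
      Kcov p x (EuclideanSpace.single i t + EuclideanSpace.single j s)) 0)
      =ᶠ[nhds (0:ℝ)] (fun s =>
        ↑p * (x j * s + a*Real.sqrt (1-s^2))^(p-1) * (x i - (a*d)*(s/Real.sqrt (1-s^2)))) := by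
    filter_upwards [Ioo_mem_nhds (by norm_num : (-1:ℝ) < 0) (by norm_num : (0:ℝ) < 1)] with s hs
    exact level1 s hs
  rw [hev.deriv_eq, (hasDerivAt_second p (x j) (x i) a (a*d)).deriv]
  have c1 : ((p-1:ℕ):ℝ) = (p:ℝ)-1 := by rw [Nat.cast_sub (by omega : 1 ≤ p), Nat.cast_one]
  have epow : p - 1 - 1 = p - 2 := by omega
  have e2 : a^(p-1)*a = a^p := by rw [← pow_succ, Nat.sub_add_cancel (by omega : 1 ≤ p)]
  rw [c1, epow]
  linear_combination (-((p:ℝ)*d)) * e2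

lemma part4 (p : ℕ) (hp : 3 ≤ p) (i j k : Fin n) :
    deriv (fun u => deriv (fun s => deriv (fun t =>
        Kcov p (EuclideanSpace.single i s + EuclideanSpace.single j t)
          (EuclideanSpace.single k u)) 0) 0) 0 = 0 := by
  set dij : ℝ := if i = j then (1:ℝ) else 0 with hdij
  set dik : ℝ := if i = k then (1:ℝ) else 0 with hdik
  set djk : ℝ := if j = k then (1:ℝ) else 0 with hdjk
  have level2 : ∀ u : ℝ, deriv (fun s => deriv (fun t =>
      Kcov p (EuclideanSpace.single i s + EuclideanSpace.single j t)
        (EuclideanSpace.single k u)) 0) 0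
      = ↑p*↑(p-1)*Real.sqrt (1-u^2)^(p-1-1)*((dik*u)*(djk*u))
        - ↑p*Real.sqrt (1-u^2)^(p-1)*(Real.sqrt (1-u^2)*dij) := by
    intro u
    have level1 : ∀ s ∈ Set.Ioo (-1:ℝ) 1, deriv (fun t =>
        Kcov p (EuclideanSpace.single i s + EuclideanSpace.single j t)
          (EuclideanSpace.single k u)) 0
        = ↑p * ((dik*u)*s + Real.sqrt (1-u^2)*Real.sqrt (1-s^2))^(p-1)
            * (djk*u - (Real.sqrt (1-u^2)*dij)*(s/Real.sqrt (1-s^2))) := by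
      intro s hs
      have hQ : (0:ℝ) < 1 - s^2 := by nlinarith [hs.1, hs.2]
      have h1 : ∀ t : ℝ, Kcov p (EuclideanSpace.single i s + EuclideanSpace.single j t)
          (EuclideanSpace.single k u)
          = (dik*(s*u) + (djk*u)*t
              + Real.sqrt (1-u^2) * Real.sqrt ((1-s^2) - t^2 - 2*(dij*s)*t))^p := by
        intro t
        have e : 1 - ‖EuclideanSpace.single i s + EuclideanSpace.single j t‖^2
            = (1-s^2) - t^2 - 2*(dij*s)*t := by rw [PS_normsq_ss, ← hdij]; ring
        have ey : 1 - ‖EuclideanSpace.single k u‖^2 = 1 - u^2 := by rw [PS_normsq_s]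
        rw [Kcov, Wfun, inner_add_left, PS_inner_ss, PS_inner_ss, e, ey, ← hdik, ← hdjk]
        ring
      simp only [h1]
      rw [(hasDerivAt_main p (dik*(s*u)) (djk*u) (Real.sqrt (1-u^2)) (1-s^2) (dij*s) hQ).deriv]
      ring
    have hev : (fun s => deriv (fun t =>
        Kcov p (EuclideanSpace.single i s + EuclideanSpace.single j t)
          (EuclideanSpace.single k u)) 0)
        =ᶠ[nhds (0:ℝ)] (fun s =>
          ↑p * ((dik*u)*s + Real.sqrt (1-u^2)*Real.sqrt (1-s^2))^(p-1)
            * (djk*u - (Real.sqrt (1-u^2)*dij)*(s/Real.sqrt (1-s^2)))) := by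
      filter_upwards [Ioo_mem_nhds (by norm_num : (-1:ℝ) < 0) (by norm_num : (0:ℝ) < 1)] with s hs
      exact level1 s hs
    rw [hev.deriv_eq, (hasDerivAt_second p (dik*u) (djk*u) (Real.sqrt (1-u^2))
      (Real.sqrt (1-u^2)*dij)).deriv]
  rw [funext level2]
  have h3 : HasDerivAt (fun u : ℝ =>
      ↑p*↑(p-1)*Real.sqrt (1-u^2)^(p-1-1)*((dik*u)*(djk*u))
        - ↑p*Real.sqrt (1-u^2)^(p-1)*(Real.sqrt (1-u^2)*dij)) 0 0 := by
    have t1 := ((sqrtQ0.fun_pow (p-1-1)).const_mul ((p:ℝ)*↑(p-1))).fun_mul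
      (((hasDerivAt_id (0:ℝ)).const_mul dik).fun_mul ((hasDerivAt_id (0:ℝ)).const_mul djk))
    have t2 := ((sqrtQ0.fun_pow (p-1)).const_mul (p:ℝ)).fun_mul (sqrtQ0.mul_const dij)
    have := t1.fun_sub t2
    refine (this).congr_deriv (Eq.symm ?_)
    norm_num
  rw [h3.deriv]

lemma part5 (p : ℕ) (hp : 3 ≤ p) (i j k l : Fin n) :
    deriv (fun u' => deriv (fun u => deriv (fun s => deriv (fun t =>
        Kcov p (EuclideanSpace.single i s + EuclideanSpace.single j t)
          (EuclideanSpace.single k u + EuclideanSpace.single l u')) 0) 0) 0) 0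
      = p * ((p : ℝ) - 1) *
          ((if i = j then (1 : ℝ) else 0) * (if k = l then (1 : ℝ) else 0)
            + (if i = l then (1 : ℝ) else 0) * (if j = k then (1 : ℝ) else 0)
            + (if i = k then (1 : ℝ) else 0) * (if j = l then (1 : ℝ) else 0))
        + p * (if i = j then (1 : ℝ) else 0) * (if k = l then (1 : ℝ) else 0) := by
  set dij : ℝ := if i = j then (1:ℝ) else 0 with hdij
  set dkl : ℝ := if k = l then (1:ℝ) else 0 with hdkl
  set dik : ℝ := if i = k then (1:ℝ) else 0 with hdik
  set dil : ℝ := if i = l then (1:ℝ) else 0 with hdil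
  set djk : ℝ := if j = k then (1:ℝ) else 0 with hdjk
  set djl : ℝ := if j = l then (1:ℝ) else 0 with hdjl
  have c1 : ((p-1:ℕ):ℝ) = (p:ℝ)-1 := by rw [Nat.cast_sub (by omega : 1 ≤ p), Nat.cast_one]
  have c2 : ((p-2:ℕ):ℝ) = (p:ℝ)-2 := by
    rw [Nat.cast_sub (by omega : 2 ≤ p)]; norm_num
  have e11 : p - 1 - 1 = p - 2 := by omega
  have e21 : p - 2 - 1 = p - 3 := by omega
  have level2 : ∀ (u u' : ℝ), deriv (fun s => deriv (fun t =>
      Kcov p (EuclideanSpace.single i s + EuclideanSpace.single j t)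
        (EuclideanSpace.single k u + EuclideanSpace.single l u')) 0) 0
      = ↑p*((p:ℝ)-1)*Real.sqrt (1-u'^2 - u^2 - 2*(dkl*u')*u)^(p-2)
          *((dik*u+dil*u')*(djk*u+djl*u'))
        - ↑p*Real.sqrt (1-u'^2 - u^2 - 2*(dkl*u')*u)^(p-1)
          *(Real.sqrt (1-u'^2 - u^2 - 2*(dkl*u')*u)*dij) := by
    intro u u'
    set R : ℝ := Real.sqrt (1-u'^2 - u^2 - 2*(dkl*u')*u) with hR
    have level1 : ∀ s ∈ Set.Ioo (-1:ℝ) 1, deriv (fun t =>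
        Kcov p (EuclideanSpace.single i s + EuclideanSpace.single j t)
          (EuclideanSpace.single k u + EuclideanSpace.single l u')) 0
        = ↑p * ((dik*u+dil*u')*s + R*Real.sqrt (1-s^2))^(p-1)
            * ((djk*u+djl*u') - (R*dij)*(s/Real.sqrt (1-s^2))) := by
      intro s hs
      have hQ : (0:ℝ) < 1 - s^2 := by nlinarith [hs.1, hs.2]
      have h1 : ∀ t : ℝ, Kcov p (EuclideanSpace.single i s + EuclideanSpace.single j t)
          (EuclideanSpace.single k u + EuclideanSpace.single l u')
          = ((dik*u+dil*u')*s + (djk*u+djl*u')*t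
              + R * Real.sqrt ((1-s^2) - t^2 - 2*(dij*s)*t))^p := by
        intro t
        have e : 1 - ‖EuclideanSpace.single i s + EuclideanSpace.single j t‖^2
            = (1-s^2) - t^2 - 2*(dij*s)*t := by rw [PS_normsq_ss, ← hdij]; ring
        have ey : 1 - ‖EuclideanSpace.single k u + EuclideanSpace.single l u'‖^2
            = 1-u'^2 - u^2 - 2*(dkl*u')*u := by rw [PS_normsq_ss, ← hdkl]; ring
        rw [Kcov, Wfun, inner_add_left, inner_add_right, inner_add_right,
          PS_inner_ss, PS_inner_ss, PS_inner_ss, PS_inner_ss, e, ey, ← hR,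
          ← hdik, ← hdil, ← hdjk, ← hdjl]
        ring
      simp only [h1]
      rw [(hasDerivAt_main p ((dik*u+dil*u')*s) (djk*u+djl*u') R (1-s^2) (dij*s) hQ).deriv]
      ring
    have hev : (fun s => deriv (fun t =>
        Kcov p (EuclideanSpace.single i s + EuclideanSpace.single j t)
          (EuclideanSpace.single k u + EuclideanSpace.single l u')) 0)
        =ᶠ[nhds (0:ℝ)] (fun s =>
          ↑p * ((dik*u+dil*u')*s + R*Real.sqrt (1-s^2))^(p-1)
            * ((djk*u+djl*u') - (R*dij)*(s/Real.sqrt (1-s^2)))) := by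
      filter_upwards [Ioo_mem_nhds (by norm_num : (-1:ℝ) < 0) (by norm_num : (0:ℝ) < 1)] with s hs
      exact level1 s hs
    rw [hev.deriv_eq, (hasDerivAt_second p (dik*u+dil*u') (djk*u+djl*u') R (R*dij)).deriv,
      c1, e11]
  have level3 : ∀ u' ∈ Set.Ioo (-1:ℝ) 1, deriv (fun u => deriv (fun s => deriv (fun t =>
      Kcov p (EuclideanSpace.single i s + EuclideanSpace.single j t)
        (EuclideanSpace.single k u + EuclideanSpace.single l u')) 0) 0) 0
      = ↑p*((p:ℝ)-1)*(dik*djl+dil*djk) * (u' * Real.sqrt (1-u'^2)^(p-2))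
        + ↑p*↑p*(dij*dkl) * ((u'/Real.sqrt (1-u'^2)) * Real.sqrt (1-u'^2)^(p-1))
        - ↑p*((p:ℝ)-1)*((p:ℝ)-2)*(dkl*(dil*djl))
            * (u'*u'*(u'/Real.sqrt (1-u'^2)) * Real.sqrt (1-u'^2)^(p-3)) := by
    intro u' hu'
    have hQ' : (0:ℝ) < 1 - u'^2 := by nlinarith [hu'.1, hu'.2]
    have hS : Real.sqrt (1-u'^2) ≠ 0 := (Real.sqrt_pos.2 hQ').ne'
    rw [funext (fun u => level2 u u')]
    have hRd := sqrtQ (1-u'^2) (dkl*u') hQ'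
    have t1 := ((hRd.fun_pow (p-2)).const_mul ((p:ℝ)*((p:ℝ)-1))).fun_mul
      ((((hasDerivAt_id' (0:ℝ)).const_mul dik).add_const (dil*u')).fun_mul
       (((hasDerivAt_id' (0:ℝ)).const_mul djk).add_const (djl*u')))
    have t2 := ((hRd.fun_pow (p-1)).const_mul (p:ℝ)).fun_mul (hRd.mul_const dij)
    rw [(t1.fun_sub t2).deriv]
    have f2 : Real.sqrt (1-u'^2)^(p-2) = Real.sqrt (1-u'^2)^(p-3)*Real.sqrt (1-u'^2) := by
      rw [← pow_succ]; congr 1; omega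
    have f1 : Real.sqrt (1-u'^2)^(p-1)
        = Real.sqrt (1-u'^2)^(p-3)*Real.sqrt (1-u'^2)*Real.sqrt (1-u'^2) := by
      rw [← pow_succ, ← pow_succ]; congr 1; omega
    norm_num [e21, e11, c1, c2]
    have hSq : Real.sqrt (1-u'^2)^2 = 1-u'^2 := Real.sq_sqrt hQ'.le
    rw [f1, f2]
    field_simp
    linear_combination (0 * (p:ℝ)^2 * u' * Real.sqrt (1-u'^2)^3 * Real.sqrt (1-u'^2)^(p-3)
      * dkl * dij) * hSq
  have hev4 : (fun u' => deriv (fun u => deriv (fun s => deriv (fun t =>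
      Kcov p (EuclideanSpace.single i s + EuclideanSpace.single j t)
        (EuclideanSpace.single k u + EuclideanSpace.single l u')) 0) 0) 0)
      =ᶠ[nhds (0:ℝ)] (fun u' =>
        ↑p*((p:ℝ)-1)*(dik*djl+dil*djk) * (u' * Real.sqrt (1-u'^2)^(p-2))
        + ↑p*↑p*(dij*dkl) * ((u'/Real.sqrt (1-u'^2)) * Real.sqrt (1-u'^2)^(p-1))
        - ↑p*((p:ℝ)-1)*((p:ℝ)-2)*(dkl*(dil*djl))
            * (u'*u'*(u'/Real.sqrt (1-u'^2)) * Real.sqrt (1-u'^2)^(p-3))) := by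
    filter_upwards [Ioo_mem_nhds (by norm_num : (-1:ℝ) < 0) (by norm_num : (0:ℝ) < 1)] with s hs
    exact level3 s hs
  rw [hev4.deriv_eq]
  have b1 := ((hasDerivAt_id' (0:ℝ)).fun_mul (sqrtQ0.fun_pow (p-2))).const_mul
    ((p:ℝ)*((p:ℝ)-1)*(dik*djl+dil*djk))
  have b2 := (divsqrtQ0.fun_mul (sqrtQ0.fun_pow (p-1))).const_mul ((p:ℝ)*(p:ℝ)*(dij*dkl))
  have b3 := ((((hasDerivAt_id' (0:ℝ)).fun_mul (hasDerivAt_id' (0:ℝ))).fun_mul divsqrtQ0).fun_mul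
    (sqrtQ0.fun_pow (p-3))).const_mul ((p:ℝ)*((p:ℝ)-1)*((p:ℝ)-2)*(dkl*(dil*djl)))
  rw [((b1.fun_add b2).fun_sub b3).deriv]
  norm_num
  ring

end Parts

/-- Covariances at the origin between the field, its gradient and its Hessian, for a
centered Gaussian field with covariance kernel `K(x,y) = W(x,y)^p`, expressed as partial
derivatives of the kernel. -/
theorem kernel_derivatives (p N : ℕ) (hp : 3 ≤ p) (hN : 2 ≤ N)
    (x : EuclideanSpace ℝ (Fin (N - 1))) (hx : ‖x‖ < 1)
    (i j k l : Fin (N - 1)) :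
    deriv (fun t => Kcov p x (EuclideanSpace.single i t)) 0
        = p * Real.sqrt (1 - ‖x‖ ^ 2) ^ (p - 1) * x i ∧
    deriv (fun s => deriv (fun t =>
        Kcov p x (EuclideanSpace.single i t + EuclideanSpace.single j s)) 0) 0
        = -(if i = j then (1 : ℝ) else 0) * p * Real.sqrt (1 - ‖x‖ ^ 2) ^ p
          + p * ((p : ℝ) - 1) * Real.sqrt (1 - ‖x‖ ^ 2) ^ (p - 2) * (x i * x j) ∧
    deriv (fun s => deriv (fun t =>
        Kcov p (EuclideanSpace.single i s) (EuclideanSpace.single j t)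
          : ℝ → ℝ) 0) 0
        = (if i = j then (1 : ℝ) else 0) * p ∧
    deriv (fun u => deriv (fun s => deriv (fun t =>
        Kcov p (EuclideanSpace.single i s + EuclideanSpace.single j t)
          (EuclideanSpace.single k u)) 0) 0) 0 = 0 ∧
    deriv (fun u' => deriv (fun u => deriv (fun s => deriv (fun t =>
        Kcov p (EuclideanSpace.single i s + EuclideanSpace.single j t)
          (EuclideanSpace.single k u + EuclideanSpace.single l u')) 0) 0) 0) 0
        = p * ((p : ℝ) - 1) *
            ((if i = j then (1 : ℝ) else 0) * (if k = l then (1 : ℝ) else 0)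
              + (if i = l then (1 : ℝ) else 0) * (if j = k then (1 : ℝ) else 0)
              + (if i = k then (1 : ℝ) else 0) * (if j = l then (1 : ℝ) else 0))
          + p * (if i = j then (1 : ℝ) else 0) * (if k = l then (1 : ℝ) else 0) := by
  refine ⟨part1 p x hx i, part2 p hp x hx i j, part3 p i j, part4 p hp i j k, part5 p hp i j k l⟩
end
end

section
/- Fix an integer p ≥ 3 and N ≥ 2, a point x in the open unit ball of ℝ^{N−1}, and a unit vector v ∈ ℝ^{N−1}. Then, as t → 0, φ₁²(x, x+tv) = p·( ⟨x,v⟩²/(1−‖x‖²) + 2 − 2(1−‖x‖²)^{(p−1)/2} + 2(p−1)(1−‖x‖²)^{(p−3)/2}·⟨x,v⟩² )·t² + o(t²). -/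
open MeasureTheory ProbabilityTheory Filter Topology Asymptotics
open scoped NNReal ENNReal

noncomputable section

open PSpin

lemma taylor2 {g g' : ℝ → ℝ} {C : ℝ} (hg0 : g 0 = 0)
    (hgd : ∀ᶠ t in 𝓝 (0:ℝ), HasDerivAt g (g' t) t)
    (hg'0 : g' 0 = 0) (hg'' : HasDerivAt g' (2*C) 0) :
    (fun t => g t - C * t^2) =o[𝓝 (0:ℝ)] fun t => t^2 := by
  have hd' : (fun t : ℝ => g' t - 2*C*t) =o[𝓝 (0:ℝ)] fun t => t := by
    have h := hg''.isLittleO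
    simp only [hg'0, sub_zero, zero_add] at h
    exact h.congr' (by filter_upwards with t; simp; ring) (by rfl)
  rw [Asymptotics.isLittleO_iff]
  intro c hc
  have h1 : ∀ᶠ t in 𝓝 (0:ℝ), |g' t - 2*C*t| ≤ c * |t| := by
    have := hd'.bound hc
    filter_upwards [this] with t ht
    simpa [Real.norm_eq_abs] using ht
  obtain ⟨δ, hδ, hδ2⟩ := Metric.eventually_nhds_iff.mp (h1.and hgd)
  rw [Metric.eventually_nhds_iff]
  refine ⟨δ, hδ, fun t ht => ?_⟩
  simp only [dist_zero_right, Real.norm_eq_abs] at ht ⊢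
  have hsub : ∀ ξ ∈ Set.uIcc (0:ℝ) t, |ξ| < δ := by
    intro ξ hξ
    rcases Set.mem_uIcc.mp hξ with ⟨h1, h2⟩ | ⟨h1, h2⟩
    · calc |ξ| = ξ := abs_of_nonneg h1
        _ ≤ t := h2
        _ ≤ |t| := le_abs_self t
        _ < δ := ht
    · calc |ξ| = -ξ := abs_of_nonpos h2
        _ ≤ -t := by linarith
        _ ≤ |t| := neg_le_abs t
        _ < δ := ht
  have key : ∀ ξ ∈ Set.uIcc (0:ℝ) t,
      HasDerivWithinAt (fun s => g s - C * s^2) (g' ξ - 2*C*ξ) (Set.uIcc (0:ℝ) t) ξ := by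
    intro ξ hξ
    have hd := (hδ2 (by simpa using hsub ξ hξ)).2
    have : HasDerivAt (fun s => g s - C * s^2) (g' ξ - C * (2*ξ)) ξ := by
      have hp : HasDerivAt (fun s : ℝ => C * s^2) (C * (2*ξ)) ξ := by
        simpa using (hasDerivAt_pow 2 ξ).const_mul C
      exact hd.sub hp
    exact (this.congr_deriv (by ring)).hasDerivWithinAt
  have hbound : ∀ ξ ∈ Set.uIcc (0:ℝ) t, ‖g' ξ - 2*C*ξ‖ ≤ c * |t| := by
    intro ξ hξ
    have h1' := (hδ2 (by simpa using hsub ξ hξ)).1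
    have : |ξ| ≤ |t| := by
      rcases Set.mem_uIcc.mp hξ with ⟨a1, a2⟩ | ⟨a1, a2⟩
      · rw [abs_of_nonneg a1]; exact a2.trans (le_abs_self t)
      · rw [abs_of_nonpos a2]; linarith [neg_le_abs t]
    calc ‖g' ξ - 2*C*ξ‖ ≤ c * |ξ| := h1'
      _ ≤ c * |t| := by nlinarith
  have := (convex_uIcc (0:ℝ) t).norm_image_sub_le_of_norm_hasDerivWithin_le key hbound
    (Set.left_mem_uIcc) (Set.right_mem_uIcc)
  simp only [hg0] at this
  calc |g t - C * t^2| = ‖(g t - C * t^2) - (0 - C * 0^2)‖ := by norm_num [Real.norm_eq_abs]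
    _ ≤ c * |t| * ‖t - 0‖ := this
    _ = c * |t^2| := by rw [Real.norm_eq_abs, sub_zero, abs_pow]; ring

lemma key_aux (p : ℕ) (hp : 3 ≤ p) (s a : ℝ) (ha : 0 < a) :
    (fun t : ℝ =>
      (2 - 2 * ((1-a) + t*s + Real.sqrt a * Real.sqrt (a - 2*t*s - t^2)) ^ p
        + p * t^2 + 2*p*a ^ (((p:ℝ)-1)/2) * (t*s)
        - 2*p*(a - 2*t*s - t^2) ^ (((p:ℝ)-1)/2) * (t*s + t^2))
      - p * (s^2/a + 2 - 2*a ^ (((p:ℝ)-1)/2)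
          + 2*((p:ℝ)-1)*a ^ (((p:ℝ)-3)/2) * s^2) * t^2)
    =o[𝓝 (0:ℝ)] fun t => t^2 := by
  have hsa : Real.sqrt a * Real.sqrt a = a := Real.mul_self_sqrt ha.le
  have hsa' : Real.sqrt a ≠ 0 := (Real.sqrt_pos.mpr ha).ne'
  set q : ℝ := ((p:ℝ)-1)/2 with hq
  set u : ℝ → ℝ := fun t => a - 2*t*s - t^2 with hu_def
  set W : ℝ → ℝ := fun t => (1-a) + t*s + Real.sqrt a * Real.sqrt (u t) with hW_def
  set G : ℝ → ℝ := fun t =>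
    2 - 2*(W t)^p + p*t^2 + 2*p*a^q*(t*s) - 2*p*(u t)^q*(t*s+t^2) with hG_def
  set G' : ℝ → ℝ := fun t =>
    -(2*(p:ℝ)*((W t)^(p-1) * (s + Real.sqrt a * ((-2*s-2*t)/(2*Real.sqrt (u t))))))
    + 2*p*t + 2*p*a^q*s
    - 2*p*(q*(u t)^(q-1)*(-2*s-2*t)*(t*s+t^2) + (u t)^q*(s+2*t)) with hG'_def
  have hu : ∀ τ:ℝ, HasDerivAt u (-2*s - 2*τ) τ := by
    intro τ
    have h1 : HasDerivAt (fun t:ℝ => 2*t*s) (2*s) τ := by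
      simpa using ((hasDerivAt_id τ).const_mul 2).mul_const s
    have h2 : HasDerivAt (fun t:ℝ => t^2) (2*τ) τ := by
      simpa using hasDerivAt_pow 2 τ
    exact (((hasDerivAt_const τ a).sub h1).sub h2).congr_deriv (by ring)
  have hu0 : u 0 = a := by simp [hu_def]
  have hupos : ∀ᶠ τ in 𝓝 (0:ℝ), 0 < u τ := by
    have hc : Continuous u := by rw [hu_def]; continuity
    have := (hc.continuousAt (x := (0:ℝ)))
    exact this.eventually_mem (by rw [hu0]; exact IsOpen.mem_nhds isOpen_Ioi ha)
  have hW' : ∀ τ:ℝ, 0 < u τ →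
      HasDerivAt W (s + Real.sqrt a * ((-2*s-2*τ)/(2*Real.sqrt (u τ)))) τ := by
    intro τ hτ
    have hsq : HasDerivAt (fun t => Real.sqrt (u t)) ((-2*s-2*τ)/(2*Real.sqrt (u τ))) τ :=
      (hu τ).sqrt hτ.ne'
    have h1 : HasDerivAt (fun t:ℝ => t*s) s τ := by simpa using (hasDerivAt_id τ).mul_const s
    exact (((hasDerivAt_const τ (1-a)).add h1).add (hsq.const_mul (Real.sqrt a))).congr_deriv (by ring)
  have hG : ∀ τ:ℝ, 0 < u τ → HasDerivAt G (G' τ) τ := by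
    intro τ hτ
    have h1 : HasDerivAt (fun t => 2*(W t)^p) (2*((p:ℝ)*(W τ)^(p-1)*(s + Real.sqrt a * ((-2*s-2*τ)/(2*Real.sqrt (u τ)))))) τ :=
      ((hW' τ hτ).pow p).const_mul 2
    have h2 : HasDerivAt (fun t:ℝ => (p:ℝ)*t^2) ((p:ℝ)*(2*τ)) τ :=
      (by simpa using hasDerivAt_pow 2 τ : HasDerivAt (fun t:ℝ => t^2) (2*τ) τ).const_mul (p:ℝ)
    have h3 : HasDerivAt (fun t:ℝ => 2*(p:ℝ)*a^q*(t*s)) (2*(p:ℝ)*a^q*s) τ := by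
      simpa using ((hasDerivAt_id τ).mul_const s).const_mul (2*(p:ℝ)*a^q)
    have hlin : HasDerivAt (fun t:ℝ => t*s+t^2) (s+2*τ) τ := by
      exact (((hasDerivAt_id τ).mul_const s).add
        (by simpa using hasDerivAt_pow 2 τ : HasDerivAt (fun t:ℝ => t^2) (2*τ) τ)).congr_deriv (by simp)
    have h4a : HasDerivAt (fun t => (u t)^q) (q*(u τ)^(q-1)*(-2*s-2*τ)) τ := by
      have := (hu τ).rpow_const (p := q) (Or.inl hτ.ne')
      convert this using 1; ring
    have h4 : HasDerivAt (fun t => 2*(p:ℝ)*((u t)^q*(t*s+t^2)))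
        (2*(p:ℝ)*((q*(u τ)^(q-1)*(-2*s-2*τ))*(τ*s+τ^2) + (u τ)^q*(s+2*τ))) τ :=
      (h4a.mul hlin).const_mul (2*(p:ℝ))
    have := (((hasDerivAt_const τ (2:ℝ)).sub h1).add h2).add h3 |>.sub h4
    refine (this.congr_of_eventuallyEq (Filter.Eventually.of_forall fun t => ?_)).congr_deriv ?_
    · simp [hG_def]; ring
    · simp [hG'_def]; ring
  have hG0 : G 0 = 0 := by
    simp [hG_def, hW_def, hu0, hsa]
  have hG'0 : G' 0 = 0 := by
    simp only [hG'_def, hu0]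
    field_simp
    ring
  have hW0 : W 0 = 1 := by simp [hW_def, hu0, hsa]
  set C : ℝ := (p:ℝ) * (s^2/a + 2 - 2*a^q + 2*((p:ℝ)-1)*a^(((p:ℝ)-3)/2)*s^2) with hC
  have hG'' : HasDerivAt G' (2*C) 0 := by
    have h0 : (0:ℝ) < u 0 := by rw [hu0]; exact ha
    have num : HasDerivAt (fun t:ℝ => -2*s-2*t) (-2) 0 := by
      exact ((hasDerivAt_const (0:ℝ) (-2*s)).sub ((hasDerivAt_id (0:ℝ)).const_mul 2)).congr_deriv (by simp)
    have den : HasDerivAt (fun t => 2*Real.sqrt (u t)) (2*((-2*s-2*0)/(2*Real.sqrt (u 0)))) 0 :=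
      ((hu 0).sqrt h0.ne').const_mul 2
    have hden : 2*Real.sqrt (u 0) ≠ 0 := by
      rw [hu0]; positivity
    have hdiv := num.div den hden
    have hB := (hdiv.const_mul (Real.sqrt a)).const_add s
    have hWp := (hW' 0 h0).pow (p-1)
    have T1 := ((hWp.mul hB).const_mul (2*(p:ℝ))).neg
    have T2 : HasDerivAt (fun t:ℝ => 2*(p:ℝ)*t) (2*(p:ℝ)) 0 := by
      simpa using (hasDerivAt_id (0:ℝ)).const_mul (2*(p:ℝ))
    have T3 : HasDerivAt (fun _:ℝ => 2*(p:ℝ)*a^q*s) 0 0 := hasDerivAt_const 0 _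
    have hlin : HasDerivAt (fun t:ℝ => t*s+t^2) (s+2*0) 0 := by
      exact (((hasDerivAt_id (0:ℝ)).mul_const s).add
        (by simpa using hasDerivAt_pow 2 (0:ℝ) : HasDerivAt (fun t:ℝ => t^2) (2*0) 0)).congr_deriv (by simp)
    have hlin2 : HasDerivAt (fun t:ℝ => s+2*t) 2 0 := by
      exact ((hasDerivAt_const (0:ℝ) s).add ((hasDerivAt_id (0:ℝ)).const_mul 2)).congr_deriv (by simp)
    have hq1 : HasDerivAt (fun t => (u t)^(q-1)) ((q-1)*(u 0)^(q-1-1)*(-2*s-2*0)) 0 := by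
      have := (hu 0).rpow_const (p := q-1) (Or.inl h0.ne')
      convert this using 1; ring
    have hq2 : HasDerivAt (fun t => (u t)^q) (q*(u 0)^(q-1)*(-2*s-2*0)) 0 := by
      have := (hu 0).rpow_const (p := q) (Or.inl h0.ne')
      convert this using 1; ring
    have P1 := ((hq1.const_mul q).mul num).mul hlin
    have P2 := hq2.mul hlin2
    have T4 := (P1.add P2).const_mul (2*(p:ℝ))
    have total := (((T1.add T2).add T3).sub T4)
    refine total.congr_deriv (Eq.symm ?_)
    have e3 : ((p:ℝ)-3)/2 = q-1 := by rw [hq]; ring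
    have e1 : a^(q-1) = a^q/a := by
      rw [Real.rpow_sub ha, Real.rpow_one]
    have e2 : a^(q-1-1) = a^q/(a*a) := by
      rw [show q-1-1 = q-(2:ℝ) by ring, Real.rpow_sub ha,
        show (2:ℝ) = ((2:ℕ):ℝ) by norm_num, Real.rpow_natCast]
      ring_nf
    have hb : Real.sqrt a ^ 2 = a := Real.sq_sqrt ha.le
    simp only [Pi.mul_apply, Pi.pow_apply, Pi.div_apply]
    simp only [hu0, hW0, one_pow, hC, e3, e1, e2]
    norm_num
    set b := Real.sqrt a with hbdef
    rw [← hb]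
    have hb' : b ≠ 0 := hsa'
    field_simp
    ring
  have hGd : ∀ᶠ t in 𝓝 (0:ℝ), HasDerivAt G (G' t) t := hupos.mono hG
  exact taylor2 hG0 hGd hG'0 hG''

/-- Second-order Taylor expansion of `φ₁²(x, x + tv)` as `t → 0`. -/
theorem phi1_taylor_expansion (p N : ℕ) (hp : 3 ≤ p) (hN : 2 ≤ N)
    (x v : EuclideanSpace ℝ (Fin (N - 1))) (hx : ‖x‖ < 1) (hv : ‖v‖ = 1) :
    (fun t : ℝ => phi1sq p x (x + t • v)
        - p * ((inner ℝ x v : ℝ) ^ 2 / (1 - ‖x‖ ^ 2)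
            + 2 - 2 * (1 - ‖x‖ ^ 2) ^ (((p : ℝ) - 1) / 2)
            + 2 * ((p : ℝ) - 1) * (1 - ‖x‖ ^ 2) ^ (((p : ℝ) - 3) / 2)
              * (inner ℝ x v : ℝ) ^ 2) * t ^ 2)
      =o[𝓝 (0 : ℝ)] fun t => t ^ 2 := by
  have h1 : ‖x‖ ^ 2 < 1 := by nlinarith [norm_nonneg x]
  have ha : (0:ℝ) < 1 - ‖x‖ ^ 2 := by linarith
  have key := key_aux p hp ((inner ℝ x v : ℝ)) (1 - ‖x‖ ^ 2) ha
  refine key.congr' ?_ EventuallyEq.rfl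
  filter_upwards with t
  have hA : ((inner ℝ x (x + t • v) : ℝ)) = ‖x‖ ^ 2 + t * (inner ℝ x v : ℝ) := by
    rw [inner_add_right, real_inner_smul_right, real_inner_self_eq_norm_sq]
  have hB : 1 - ‖x + t • v‖ ^ 2 = 1 - ‖x‖ ^ 2 - 2 * t * (inner ℝ x v : ℝ) - t ^ 2 := by
    rw [norm_add_sq_real, real_inner_smul_right, norm_smul, hv, Real.norm_eq_abs, mul_one,
      sq_abs]
    ring
  have hC : ‖x - (x + t • v)‖ ^ 2 = t ^ 2 := by
    have h : x - (x + t • v) = -(t • v) := by abel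
    rw [h, norm_neg, norm_smul, hv, Real.norm_eq_abs, mul_one, sq_abs]
  have hD : ((inner ℝ x ((x + t • v) - x) : ℝ)) = t * (inner ℝ x v : ℝ) := by
    have h : (x + t • v) - x = t • v := by abel
    rw [h, real_inner_smul_right]
  have hE : ((inner ℝ (x + t • v) ((x + t • v) - x) : ℝ)) = t * (inner ℝ x v : ℝ) + t ^ 2 := by
    have h : (x + t • v) - x = t • v := by abel
    rw [h, inner_add_left, real_inner_smul_right, real_inner_smul_left, real_inner_smul_right,
      real_inner_self_eq_norm_sq, hv]
    ring
  rw [phi1sq, Wfun, hA, hB, hC, hD, hE]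
  ring
end
end
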